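/- Fix a real number γ and an integer n ≥ 1. Let r₁,…,r_n and s₁,…,s_n be points in ℝ² and let y₁,…,y_n, w₁,…,w_n be real numbers (dual values) satisfying, with indices taken cyclically (so r_{n+1} means r₁ and y_{n+1} means y₁): (i) y_k + w_k ≤ γ·D(r_k, s_k) for every 1 ≤ k ≤ n; (ii) w_k + y_{k+1} = D(s_k, r_{k+1}) for every 1 ≤ k ≤ n. Then the γ-net-cost of the alternating cycle is nonnegative: γ·Σ_{k=1}^{n} D(r_k, s_k) − Σ_{k=1}^{n} D(s_k, r_{k+1}) ≥ 0. -/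

import Mathlib

open Finset

/-- ℓ1 distance in the time-augmented (TA) plane. -/
def taDist (p q : ℝ × ℝ) : ℝ := |p.1 - q.1| + |p.2 - q.2|

lemma sum_shift (n : ℕ) (hn : 1 ≤ n) (y : ℕ → ℝ) :
    ∑ k ∈ range n, y ((k + 1) % n) = ∑ k ∈ range n, y k := by
  obtain ⟨m, rfl⟩ : ∃ m, n = m + 1 := ⟨n - 1, by omega⟩
  rw [Finset.sum_range_succ, Finset.sum_range_succ' _ m]
  congr 1
  · exact Finset.sum_congr rfl fun k hk => by
      rw [Nat.mod_eq_of_lt (by simpa using Nat.succ_lt_succ (mem_range.mp hk))]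
  · rw [Nat.mod_self]

/-- The core of Claim C.6 (bwlb): an alternating cycle whose duals are feasible
on forward edges and tight on backward edges (taken cyclically) has nonnegative
γ-net-cost. -/
theorem cycle_netCost_nonneg (γ : ℝ) (n : ℕ) (hn : 1 ≤ n)
    (r s : ℕ → ℝ × ℝ) (y w : ℕ → ℝ)
    (h1 : ∀ k < n, y k + w k ≤ γ * taDist (r k) (s k))
    (h2 : ∀ k < n, w k + y ((k + 1) % n) = taDist (s k) (r ((k + 1) % n))) :
    0 ≤ γ * ∑ k ∈ range n, taDist (r k) (s k)
        - ∑ k ∈ range n, taDist (s k) (r ((k + 1) % n)) := by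
  have hb : ∑ k ∈ range n, taDist (s k) (r ((k + 1) % n))
      = ∑ k ∈ range n, (w k + y ((k + 1) % n)) :=
    (Finset.sum_congr rfl fun k hk => (h2 k (mem_range.mp hk)).symm)
  have hs : ∑ k ∈ range n, y ((k + 1) % n) = ∑ k ∈ range n, y k :=
    sum_shift n hn y
  have hf : ∑ k ∈ range n, (y k + w k) ≤ γ * ∑ k ∈ range n, taDist (r k) (s k) := by
    rw [Finset.mul_sum]
    exact Finset.sum_le_sum fun k hk => h1 k (mem_range.mp hk)
  rw [hb, Finset.sum_add_distrib, hs]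
  rw [Finset.sum_add_distrib] at hf
  linarith
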